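/- (Theorem 3, Morse property) Let 0 < r_1 < r_2 < r_3. Every critical point of the perimeter L on the torus (ℝ/2πℤ)² (coordinates (α_1, α_2), with α_3 = 0) is nondegenerate, i.e. the Hessian matrix of L has nonzero determinant there; thus L is a Morse function. -/

import Mathlib

open Real

/-- Length of the chordal segment between points at radii `r`, `r'` whose polar angles
differ by `θ`. -/
noncomputable def ell (r r' θ : ℝ) : ℝ :=
  Real.sqrt (r ^ 2 + r' ^ 2 - 2 * r * r' * Real.cos θ)

/-- The perimeter of the connecting cycle for three concentric circles of radii
`r1, r2, r3`, as a function of the polar angles `a1, a2` of the first two vertices,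
the third angle being fixed to `0`. -/
noncomputable def L3 (r1 r2 r3 : ℝ) (a1 a2 : ℝ) : ℝ :=
  ell r1 r2 (a2 - a1) + ell r2 r3 (0 - a2) + ell r3 r1 (a1 - 0)

/-- Partial derivative in the first variable. -/
noncomputable def pd1 (f : ℝ → ℝ → ℝ) (a b : ℝ) : ℝ := deriv (fun x => f x b) a

/-- Partial derivative in the second variable. -/
noncomputable def pd2 (f : ℝ → ℝ → ℝ) (a b : ℝ) : ℝ := deriv (fun y => f a y) b

/-- The Hessian matrix of `L3 r1 r2 r3` at `(a, b)` in the reduced coordinates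
`(α₁, α₂)`. -/
noncomputable def hess3 (r1 r2 r3 a b : ℝ) : Matrix (Fin 2) (Fin 2) ℝ :=
  !![pd1 (pd1 (L3 r1 r2 r3)) a b, pd1 (pd2 (L3 r1 r2 r3)) a b;
     pd2 (pd1 (L3 r1 r2 r3)) a b, pd2 (pd2 (L3 r1 r2 r3)) a b]

set_option maxHeartbeats 1000000

noncomputable def gg (r r' θ : ℝ) : ℝ := r * r' * Real.sin θ / ell r r' θ

noncomputable def hh (r r' θ : ℝ) : ℝ :=
  (r * r' * Real.cos θ * ell r r' θ - r * r' * Real.sin θ * gg r r' θ) / (ell r r' θ) ^ 2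

lemma Qpos {r r' : ℝ} (hr : 0 < r) (hr' : 0 < r') (hne : r ≠ r') (θ : ℝ) :
    0 < r ^ 2 + r' ^ 2 - 2 * r * r' * Real.cos θ := by
  have h : r - r' ≠ 0 := sub_ne_zero.2 hne
  have h2 : 0 < (r - r') ^ 2 := by positivity
  nlinarith [Real.cos_le_one θ, mul_pos hr hr']

lemma ell_pos {r r' : ℝ} (hr : 0 < r) (hr' : 0 < r') (hne : r ≠ r') (θ : ℝ) :
    0 < ell r r' θ := Real.sqrt_pos.2 (Qpos hr hr' hne θ)

lemma ell_sq {r r' : ℝ} (hr : 0 < r) (hr' : 0 < r') (hne : r ≠ r') (θ : ℝ) :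
    (ell r r' θ) ^ 2 = r ^ 2 + r' ^ 2 - 2 * r * r' * Real.cos θ :=
  Real.sq_sqrt (Qpos hr hr' hne θ).le

lemma hasDerivAt_ell {r r' : ℝ} (hr : 0 < r) (hr' : 0 < r') (hne : r ≠ r') (θ : ℝ) :
    HasDerivAt (fun t => ell r r' t) (gg r r' θ) θ := by
  have h1 : HasDerivAt (fun t => r ^ 2 + r' ^ 2 - 2 * r * r' * Real.cos t)
      (2 * r * r' * Real.sin θ) θ := by
    have := ((Real.hasDerivAt_cos θ).const_mul (2 * r * r')).const_sub (r ^ 2 + r' ^ 2)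
    exact this.congr_deriv (by ring)
  have h2 := h1.sqrt (ne_of_gt (Qpos hr hr' hne θ))
  refine h2.congr_deriv ?_
  have hl := (ell_pos hr hr' hne θ).ne'
  unfold gg
  rw [show Real.sqrt (r ^ 2 + r' ^ 2 - 2 * r * r' * Real.cos θ) = ell r r' θ from rfl]
  field_simp

lemma hasDerivAt_gg {r r' : ℝ} (hr : 0 < r) (hr' : 0 < r') (hne : r ≠ r') (θ : ℝ) :
    HasDerivAt (fun t => gg r r' t) (hh r r' θ) θ := by
  have h1 : HasDerivAt (fun t => r * r' * Real.sin t) (r * r' * Real.cos θ) θ :=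
    (Real.hasDerivAt_sin θ).const_mul (r * r')
  exact h1.div (hasDerivAt_ell hr hr' hne θ) (ell_pos hr hr' hne θ).ne'

lemma eq_of_sq_eq_sq' {a b : ℝ} (ha : 0 < a) (hb : 0 ≤ b) (h : a ^ 2 = b ^ 2) : a = b := by
  rw [← Real.sqrt_sq ha.le, h, Real.sqrt_sq hb]

lemma sq_cases {x y : ℝ} (h : x ^ 2 = y ^ 2) : x = y ∨ x = -y := by
  have : (x - y) * (x + y) = 0 := by linear_combination h
  rcases mul_eq_zero.mp this with h' | h'
  · left; linarith
  · right; linarith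

lemma Ncore (t1 t2 t3 d L1 L2 L3 e1 e2 e3 : ℝ)
    (ht1 : 0 ≤ t1) (ht12 : t1 < t2) (ht23 : t2 < t3)
    (hL1 : 0 < L1) (hL2 : 0 < L2) (hL3 : 0 < L3)
    (hL1sq : L1 ^ 2 = t1 ^ 2 + t2 ^ 2 - 2 * e1)
    (hL2sq : L2 ^ 2 = t2 ^ 2 + t3 ^ 2 - 2 * e2)
    (hL3sq : L3 ^ 2 = t3 ^ 2 + t1 ^ 2 - 2 * e3)
    (he1 : e1 ^ 2 = (t1 * t2) ^ 2) (he2 : e2 ^ 2 = (t2 * t3) ^ 2)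
    (he3 : e3 ^ 2 = (t3 * t1) ^ 2)
    (hpos : 0 < d ^ 2 + t1 ^ 2)
    (hCOS : (e3 + d ^ 2) * (d ^ 2 + t2 ^ 2) = (e1 + d ^ 2) * (e2 + d ^ 2) - d ^ 2 * L1 * L2)
    (hSIN : d * (L3 * (d ^ 2 + t2 ^ 2) + L1 * (e2 + d ^ 2) + (e1 + d ^ 2) * L2) = 0) :
    e1 * e2 * L3 + e1 * e3 * L2 + e2 * e3 * L1 ≠ 0 := by
  have ht2 : 0 < t2 := lt_of_le_of_lt ht1 ht12
  have ht3 : 0 < t3 := ht2.trans ht23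
  rcases ht1.eq_or_lt with h0 | h0
  · -- t1 = 0 : degenerate tangential case, impossible
    have h0' : t1 = 0 := h0.symm
    subst h0'
    have hd : d ≠ 0 := by
      intro h; rw [h] at hpos; simp at hpos
    have he1' : e1 = 0 := by
      have : e1 ^ 2 = 0 := by rw [he1]; ring
      exact pow_eq_zero_iff (n := 2) (by norm_num) |>.mp this
    have he3' : e3 = 0 := by
      have : e3 ^ 2 = 0 := by rw [he3]; ring
      exact pow_eq_zero_iff (n := 2) (by norm_num) |>.mp this
    have hL1v : L1 = t2 := eq_of_sq_eq_sq' hL1 ht2.le (by rw [hL1sq, he1']; ring)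
    have hL3v : L3 = t3 := eq_of_sq_eq_sq' hL3 ht3.le (by rw [hL3sq, he3']; ring)
    rcases sq_cases he2 with he2v | he2v
    · have hL2v : L2 = t3 - t2 :=
        eq_of_sq_eq_sq' hL2 (by linarith) (by rw [hL2sq, he2v]; ring)
      exfalso
      have hP : d * (2 * d ^ 2 * t3 + 2 * t2 ^ 2 * t3) = 0 := by
        rw [hL1v, hL2v, hL3v, he1', he2v] at hSIN
        linear_combination hSIN
      rcases mul_eq_zero.mp hP with h | h
      · exact hd h
      · have q1 : 0 ≤ d ^ 2 * t3 := mul_nonneg (sq_nonneg d) ht3.le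
        have q2 : 0 < t2 ^ 2 * t3 := mul_pos (by positivity) ht3
        linarith
    · have hL2v : L2 = t2 + t3 :=
        eq_of_sq_eq_sq' hL2 (by linarith) (by rw [hL2sq, he2v]; ring)
      exfalso
      have hP : d ^ 2 * (2 * t2 ^ 2 + 2 * t2 * t3) = 0 := by
        rw [hL1v, hL2v, he1', he2v, he3'] at hCOS
        linear_combination hCOS
      have hd2 : d ^ 2 ≠ 0 := pow_ne_zero 2 hd
      rcases mul_eq_zero.mp hP with h | h
      · exact hd2 h
      · have q1 : 0 < t2 * t3 := mul_pos ht2 ht3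
        have q2 : 0 < t2 ^ 2 := by positivity
        linarith
  · -- 0 < t1
    rcases sq_cases he1 with he1v | he1v <;>
    rcases sq_cases he2 with he2v | he2v <;>
    [skip; skip; skip; skip] <;>
    rcases sq_cases he3 with he3v | he3v
    · -- (+,+,+)
      have hL1v : L1 = t2 - t1 := eq_of_sq_eq_sq' hL1 (by linarith) (by rw [hL1sq, he1v]; ring)
      have hL2v : L2 = t3 - t2 := eq_of_sq_eq_sq' hL2 (by linarith) (by rw [hL2sq, he2v]; ring)
      have hL3v : L3 = t3 - t1 := eq_of_sq_eq_sq' hL3 (by linarith) (by rw [hL3sq, he3v]; ring)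
      have hval : e1 * e2 * L3 + e1 * e3 * L2 + e2 * e3 * L1
          = (2 * t1 * t2 ^ 2 * t3) * (t3 - t1) := by
        rw [he1v, he2v, he3v, hL1v, hL2v, hL3v]; ring
      rw [hval]
      exact ne_of_gt (mul_pos (by positivity) (by linarith))
    · -- (+,+,-)
      have hL1v : L1 = t2 - t1 := eq_of_sq_eq_sq' hL1 (by linarith) (by rw [hL1sq, he1v]; ring)
      have hL2v : L2 = t3 - t2 := eq_of_sq_eq_sq' hL2 (by linarith) (by rw [hL2sq, he2v]; ring)
      have hL3v : L3 = t3 + t1 := eq_of_sq_eq_sq' hL3 (by linarith) (by rw [hL3sq, he3v]; ring)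
      have hval : e1 * e2 * L3 + e1 * e3 * L2 + e2 * e3 * L1
          = 2 * t1 ^ 2 * t2 ^ 2 * t3 := by
        rw [he1v, he2v, he3v, hL1v, hL2v, hL3v]; ring
      rw [hval]
      positivity
    · -- (+,-,+) : the impossible pattern
      exfalso
      have hL1v : L1 = t2 - t1 := eq_of_sq_eq_sq' hL1 (by linarith) (by rw [hL1sq, he1v]; ring)
      have hL2v : L2 = t2 + t3 := eq_of_sq_eq_sq' hL2 (by linarith) (by rw [hL2sq, he2v]; ring)
      have hL3v : L3 = t3 - t1 := eq_of_sq_eq_sq' hL3 (by linarith) (by rw [hL3sq, he3v]; ring)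
      have hP : d * (2 * d ^ 2 * (t2 + t3 - t1) + 2 * (t1 * t2 * t3)) = 0 := by
        rw [hL1v, hL2v, hL3v, he1v, he2v] at hSIN
        linear_combination hSIN
      rcases mul_eq_zero.mp hP with h | h
      · rw [h, he1v, he2v, he3v, hL1v, hL2v] at hCOS
        have : (2 * t1 * t2 ^ 2 * t3 : ℝ) = 0 := by linear_combination hCOS
        have q : (0:ℝ) < 2 * t1 * t2 ^ 2 * t3 := by positivity
        linarith
      · have q1 : 0 ≤ d ^ 2 * (t2 + t3 - t1) :=
          mul_nonneg (sq_nonneg d) (by linarith)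
        have q2 : 0 < t1 * t2 * t3 := mul_pos (mul_pos h0 ht2) ht3
        linarith
    · -- (+,-,-)
      have hL1v : L1 = t2 - t1 := eq_of_sq_eq_sq' hL1 (by linarith) (by rw [hL1sq, he1v]; ring)
      have hL2v : L2 = t2 + t3 := eq_of_sq_eq_sq' hL2 (by linarith) (by rw [hL2sq, he2v]; ring)
      have hL3v : L3 = t3 + t1 := eq_of_sq_eq_sq' hL3 (by linarith) (by rw [hL3sq, he3v]; ring)
      have hval : e1 * e2 * L3 + e1 * e3 * L2 + e2 * e3 * L1
          = -((2 * t1 ^ 2 * t2 * t3) * (t2 + t3)) := by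
        rw [he1v, he2v, he3v, hL1v, hL2v, hL3v]; ring
      rw [hval]
      have q : (0:ℝ) < (2 * t1 ^ 2 * t2 * t3) * (t2 + t3) :=
        mul_pos (by positivity) (by linarith)
      intro hc; linarith [neg_eq_zero.mp hc]
    · -- (-,+,+)
      have hL1v : L1 = t1 + t2 := eq_of_sq_eq_sq' hL1 (by linarith) (by rw [hL1sq, he1v]; ring)
      have hL2v : L2 = t3 - t2 := eq_of_sq_eq_sq' hL2 (by linarith) (by rw [hL2sq, he2v]; ring)
      have hL3v : L3 = t3 - t1 := eq_of_sq_eq_sq' hL3 (by linarith) (by rw [hL3sq, he3v]; ring)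
      have hval : e1 * e2 * L3 + e1 * e3 * L2 + e2 * e3 * L1
          = 2 * t1 ^ 2 * t2 ^ 2 * t3 := by
        rw [he1v, he2v, he3v, hL1v, hL2v, hL3v]; ring
      rw [hval]
      positivity
    · -- (-,+,-)
      have hL1v : L1 = t1 + t2 := eq_of_sq_eq_sq' hL1 (by linarith) (by rw [hL1sq, he1v]; ring)
      have hL2v : L2 = t3 - t2 := eq_of_sq_eq_sq' hL2 (by linarith) (by rw [hL2sq, he2v]; ring)
      have hL3v : L3 = t3 + t1 := eq_of_sq_eq_sq' hL3 (by linarith) (by rw [hL3sq, he3v]; ring)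
      have hval : e1 * e2 * L3 + e1 * e3 * L2 + e2 * e3 * L1
          = -((2 * t1 * t2 ^ 2 * t3) * (t1 + t3)) := by
        rw [he1v, he2v, he3v, hL1v, hL2v, hL3v]; ring
      rw [hval]
      have q : (0:ℝ) < (2 * t1 * t2 ^ 2 * t3) * (t1 + t3) :=
        mul_pos (by positivity) (by linarith)
      intro hc; linarith [neg_eq_zero.mp hc]
    · -- (-,-,+)
      have hL1v : L1 = t1 + t2 := eq_of_sq_eq_sq' hL1 (by linarith) (by rw [hL1sq, he1v]; ring)
      have hL2v : L2 = t2 + t3 := eq_of_sq_eq_sq' hL2 (by linarith) (by rw [hL2sq, he2v]; ring)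
      have hL3v : L3 = t3 - t1 := eq_of_sq_eq_sq' hL3 (by linarith) (by rw [hL3sq, he3v]; ring)
      have hval : e1 * e2 * L3 + e1 * e3 * L2 + e2 * e3 * L1
          = -((2 * t1 ^ 2 * t2 * t3) * (t2 + t3)) := by
        rw [he1v, he2v, he3v, hL1v, hL2v, hL3v]; ring
      rw [hval]
      have q : (0:ℝ) < (2 * t1 ^ 2 * t2 * t3) * (t2 + t3) :=
        mul_pos (by positivity) (by linarith)
      intro hc; linarith [neg_eq_zero.mp hc]
    · -- (-,-,-)
      have hL1v : L1 = t1 + t2 := eq_of_sq_eq_sq' hL1 (by linarith) (by rw [hL1sq, he1v]; ring)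
      have hL2v : L2 = t2 + t3 := eq_of_sq_eq_sq' hL2 (by linarith) (by rw [hL2sq, he2v]; ring)
      have hL3v : L3 = t3 + t1 := eq_of_sq_eq_sq' hL3 (by linarith) (by rw [hL3sq, he3v]; ring)
      have hval : e1 * e2 * L3 + e1 * e3 * L2 + e2 * e3 * L1
          = (2 * t1 * t2 * t3) * (t1 * t2 + t1 * t3 + t2 * t3) := by
        rw [he1v, he2v, he3v, hL1v, hL2v, hL3v]; ring
      rw [hval]
      have q1 : 0 < t1 * t2 := mul_pos h0 ht2
      have q2 : 0 < t1 * t3 := mul_pos h0 ht3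
      have q3 : 0 < t2 * t3 := mul_pos ht2 ht3
      exact ne_of_gt (mul_pos (by positivity) (by linarith))

lemma gg_mul {r r' : ℝ} (hr : 0 < r) (hr' : 0 < r') (hne : r ≠ r') (θ : ℝ) :
    r * r' * Real.sin θ = gg r r' θ * ell r r' θ := by
  rw [gg, div_mul_cancel₀ _ (ell_pos hr hr' hne θ).ne']

lemma hh_eq {r r' θ d : ℝ} (hr : 0 < r) (hr' : 0 < r') (hne : r ≠ r')
    (hd : gg r r' θ = d) :
    hh r r' θ = (r * r' * Real.cos θ - d ^ 2) / ell r r' θ := by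
  have hl := (ell_pos hr hr' hne θ).ne'
  have hs : r * r' * Real.sin θ = d * ell r r' θ := by
    rw [← hd]; linear_combination gg_mul hr hr' hne θ
  rw [hh, hd, hs]
  field_simp

lemma d_sq_le {r r' θ d L : ℝ} (hL : 0 < L)
    (hLsq : L ^ 2 = r ^ 2 + r' ^ 2 - 2 * r * r' * Real.cos θ)
    (hs : r * r' * Real.sin θ = d * L) : d ^ 2 ≤ r ^ 2 := by
  have hsc := Real.sin_sq_add_cos_sq θ
  have key : (r ^ 2 - d ^ 2) * L ^ 2 = (r ^ 2 - r * r' * Real.cos θ) ^ 2 := by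
    linear_combination r ^ 2 * hLsq - (r * r') ^ 2 * hsc + (r * r' * Real.sin θ + d * L) * hs
  nlinarith [sq_nonneg (r ^ 2 - r * r' * Real.cos θ), pow_pos hL 2]

lemma e_sq {r r' θ d L : ℝ}
    (hLsq : L ^ 2 = r ^ 2 + r' ^ 2 - 2 * r * r' * Real.cos θ)
    (hs : r * r' * Real.sin θ = d * L) :
    (r * r' * Real.cos θ - d ^ 2) ^ 2 = (r ^ 2 - d ^ 2) * (r' ^ 2 - d ^ 2) := by
  have hsc := Real.sin_sq_add_cos_sq θ
  linear_combination (r * r') ^ 2 * hsc - (r * r' * Real.sin θ + d * L) * hs - d ^ 2 * hLsq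

lemma core {r1 r2 r3 θ1 θ2 θ3 : ℝ} (h1 : 0 < r1) (h12 : r1 < r2) (h23 : r2 < r3)
    (hsum : θ1 + θ2 + θ3 = 0)
    (hg3 : gg r3 r1 θ3 = gg r1 r2 θ1) (hg2 : gg r1 r2 θ1 = gg r2 r3 θ2) :
    (hh r3 r1 θ3 + hh r1 r2 θ1) * (hh r1 r2 θ1 + hh r2 r3 θ2) - hh r1 r2 θ1 ^ 2 ≠ 0 := by
  have h2 : 0 < r2 := h1.trans h12
  have h3 : 0 < r3 := h2.trans h23
  have hn12 : r1 ≠ r2 := ne_of_lt h12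
  have hn23 : r2 ≠ r3 := ne_of_lt h23
  have hn31 : r3 ≠ r1 := ne_of_gt (h12.trans h23)
  set d := gg r1 r2 θ1 with hdd
  set L1 := ell r1 r2 θ1 with hL1d
  set L2 := ell r2 r3 θ2 with hL2d
  set L3 := ell r3 r1 θ3 with hL3d
  have hL1 : 0 < L1 := ell_pos h1 h2 hn12 θ1
  have hL2 : 0 < L2 := ell_pos h2 h3 hn23 θ2
  have hL3 : 0 < L3 := ell_pos h3 h1 hn31 θ3
  have hL1sq : L1 ^ 2 = r1 ^ 2 + r2 ^ 2 - 2 * r1 * r2 * Real.cos θ1 := by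
    rw [hL1d]; exact ell_sq h1 h2 hn12 θ1
  have hL2sq : L2 ^ 2 = r2 ^ 2 + r3 ^ 2 - 2 * r2 * r3 * Real.cos θ2 := by
    rw [hL2d]; exact ell_sq h2 h3 hn23 θ2
  have hL3sq : L3 ^ 2 = r3 ^ 2 + r1 ^ 2 - 2 * r3 * r1 * Real.cos θ3 := by
    rw [hL3d]; exact ell_sq h3 h1 hn31 θ3
  have hs1 : r1 * r2 * Real.sin θ1 = d * L1 := by
    rw [hdd, hL1d]; linear_combination gg_mul h1 h2 hn12 θ1
  have hs2 : r2 * r3 * Real.sin θ2 = d * L2 := by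
    rw [hg2, hL2d]; linear_combination gg_mul h2 h3 hn23 θ2
  have hs3 : r3 * r1 * Real.sin θ3 = d * L3 := by
    rw [← hg3, hL3d]; linear_combination gg_mul h3 h1 hn31 θ3
  -- bounds on d
  have hd1 : d ^ 2 ≤ r1 ^ 2 := d_sq_le hL1 hL1sq hs1
  have hd2 : d ^ 2 ≤ r2 ^ 2 :=
    d_sq_le (r := r2) (r' := r1) (θ := θ1) hL1
      (by linear_combination hL1sq) (by linear_combination hs1)
  have hd3 : d ^ 2 ≤ r3 ^ 2 :=
    d_sq_le (r := r3) (r' := r2) (θ := θ2) hL2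
      (by linear_combination hL2sq) (by linear_combination hs2)
  -- the tangency radii
  set t1 := Real.sqrt (r1 ^ 2 - d ^ 2) with ht1d
  set t2 := Real.sqrt (r2 ^ 2 - d ^ 2) with ht2d
  set t3 := Real.sqrt (r3 ^ 2 - d ^ 2) with ht3d
  have ht1sq : t1 ^ 2 = r1 ^ 2 - d ^ 2 := Real.sq_sqrt (by linarith)
  have ht2sq : t2 ^ 2 = r2 ^ 2 - d ^ 2 := Real.sq_sqrt (by linarith)
  have ht3sq : t3 ^ 2 = r3 ^ 2 - d ^ 2 := Real.sq_sqrt (by linarith)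
  have ht1 : 0 ≤ t1 := Real.sqrt_nonneg _
  have hr12sq : r1 ^ 2 < r2 ^ 2 := by
    have := pow_lt_pow_left₀ h12 h1.le (two_ne_zero); exact this
  have hr23sq : r2 ^ 2 < r3 ^ 2 := by
    have := pow_lt_pow_left₀ h23 h2.le (two_ne_zero); exact this
  have ht12 : t1 < t2 := by
    rw [ht1d, ht2d]
    exact Real.sqrt_lt_sqrt (by linarith) (by linarith)
  have ht23 : t2 < t3 := by
    rw [ht2d, ht3d]
    exact Real.sqrt_lt_sqrt (by linarith) (by linarith)
  -- trig closure
  have ht3eq : θ3 = -(θ1 + θ2) := by linarith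
  have hc3 : Real.cos θ3 = Real.cos θ1 * Real.cos θ2 - Real.sin θ1 * Real.sin θ2 := by
    rw [ht3eq, Real.cos_neg, Real.cos_add]
  have hsin3 : Real.sin θ3 = -(Real.sin θ1 * Real.cos θ2 + Real.cos θ1 * Real.sin θ2) := by
    rw [ht3eq, Real.sin_neg, Real.sin_add]
  have baseC : r3 * r1 * Real.cos θ3 * r2 ^ 2
      = (r1 * r2 * Real.cos θ1) * (r2 * r3 * Real.cos θ2) - (d * L1) * (d * L2) := by
    rw [hc3]
    linear_combination (-(r2 * r3 * Real.sin θ2)) * hs1 - (d * L1) * hs2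
  have baseS : d * L3 * r2 ^ 2
      = -((d * L1) * (r2 * r3 * Real.cos θ2) + (r1 * r2 * Real.cos θ1) * (d * L2)) := by
    rw [← hs3, hsin3]
    linear_combination (-(r2 * r3 * Real.cos θ2)) * hs1 - (r1 * r2 * Real.cos θ1) * hs2
  -- instantiate the algebraic core
  have key := Ncore t1 t2 t3 d L1 L2 L3
    (r1 * r2 * Real.cos θ1 - d ^ 2) (r2 * r3 * Real.cos θ2 - d ^ 2)
    (r3 * r1 * Real.cos θ3 - d ^ 2)
    ht1 ht12 ht23 hL1 hL2 hL3
    (by rw [ht1sq, ht2sq]; linear_combination hL1sq)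
    (by rw [ht2sq, ht3sq]; linear_combination hL2sq)
    (by rw [ht3sq, ht1sq]; linear_combination hL3sq)
    (by rw [mul_pow, ht1sq, ht2sq]; exact e_sq hL1sq hs1)
    (by rw [mul_pow, ht2sq, ht3sq]; exact e_sq hL2sq hs2)
    (by rw [mul_pow, ht3sq, ht1sq]; exact e_sq hL3sq hs3)
    (by linarith [ht1sq, pow_pos h1 2])
    (by linear_combination baseC + (r3 * r1 * Real.cos θ3) * ht2sq)
    (by linear_combination baseS + (d * L3) * ht2sq)
  -- rewrite the Hessian determinant as a quotient
  have hhv1 : hh r1 r2 θ1 = (r1 * r2 * Real.cos θ1 - d ^ 2) / L1 := by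
    rw [hL1d]; exact hh_eq h1 h2 hn12 hdd.symm
  have hhv2 : hh r2 r3 θ2 = (r2 * r3 * Real.cos θ2 - d ^ 2) / L2 := by
    rw [hL2d]; exact hh_eq h2 h3 hn23 (hg2.symm.trans hdd.symm)
  have hhv3 : hh r3 r1 θ3 = (r3 * r1 * Real.cos θ3 - d ^ 2) / L3 := by
    rw [hL3d]; exact hh_eq h3 h1 hn31 (hg3.trans hdd.symm)
  rw [hhv1, hhv2, hhv3]
  have hgoal : ((r3 * r1 * Real.cos θ3 - d ^ 2) / L3 + (r1 * r2 * Real.cos θ1 - d ^ 2) / L1)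
        * ((r1 * r2 * Real.cos θ1 - d ^ 2) / L1 + (r2 * r3 * Real.cos θ2 - d ^ 2) / L2)
        - ((r1 * r2 * Real.cos θ1 - d ^ 2) / L1) ^ 2
      = ((r1 * r2 * Real.cos θ1 - d ^ 2) * (r2 * r3 * Real.cos θ2 - d ^ 2) * L3
          + (r1 * r2 * Real.cos θ1 - d ^ 2) * (r3 * r1 * Real.cos θ3 - d ^ 2) * L2
          + (r2 * r3 * Real.cos θ2 - d ^ 2) * (r3 * r1 * Real.cos θ3 - d ^ 2) * L1)
        / (L1 * L2 * L3) := by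
    field_simp
    ring
  rw [hgoal]
  exact div_ne_zero key (by positivity)

section
variable {r1 r2 r3 : ℝ}

lemma pd1_L3 (h1 : 0 < r1) (h12 : r1 < r2) (h23 : r2 < r3) (a b : ℝ) :
    pd1 (L3 r1 r2 r3) a b = gg r3 r1 (a - 0) - gg r1 r2 (b - a) := by
  have h2 : 0 < r2 := h1.trans h12
  have h3 : 0 < r3 := h2.trans h23
  have d1 : HasDerivAt (fun x : ℝ => b - x) (-1) a := by
    simpa using (hasDerivAt_id a).const_sub b
  have d2 : HasDerivAt (fun x : ℝ => x - 0) 1 a := (hasDerivAt_id a).sub_const 0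
  have t1 : HasDerivAt (fun x => ell r1 r2 (b - x)) (gg r1 r2 (b - a) * (-1)) a :=
    (hasDerivAt_ell h1 h2 (ne_of_lt h12) (b - a)).comp a d1
  have t3 : HasDerivAt (fun x => ell r3 r1 (x - 0)) (gg r3 r1 (a - 0) * 1) a :=
    (hasDerivAt_ell h3 h1 (ne_of_gt (h12.trans h23)) (a - 0)).comp (h₂ := fun t => ell r3 r1 t) a d2
  have tot : HasDerivAt (fun x => L3 r1 r2 r3 x b)
      (gg r1 r2 (b - a) * (-1) + 0 + gg r3 r1 (a - 0) * 1) a :=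
    ((t1.add_const (ell r2 r3 (0 - b))).congr_deriv (by ring)).add t3
  have := tot.deriv
  unfold pd1
  rw [this]; ring

lemma pd2_L3 (h1 : 0 < r1) (h12 : r1 < r2) (h23 : r2 < r3) (a b : ℝ) :
    pd2 (L3 r1 r2 r3) a b = gg r1 r2 (b - a) - gg r2 r3 (0 - b) := by
  have h2 : 0 < r2 := h1.trans h12
  have h3 : 0 < r3 := h2.trans h23
  have d1 : HasDerivAt (fun y : ℝ => y - a) 1 b := (hasDerivAt_id b).sub_const a
  have d2 : HasDerivAt (fun y : ℝ => 0 - y) (-1) b := by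
    simpa using (hasDerivAt_id b).const_sub 0
  have t1 : HasDerivAt (fun y => ell r1 r2 (y - a)) (gg r1 r2 (b - a) * 1) b :=
    (hasDerivAt_ell h1 h2 (ne_of_lt h12) (b - a)).comp (h₂ := fun t => ell r1 r2 t) b d1
  have t2 : HasDerivAt (fun y => ell r2 r3 (0 - y)) (gg r2 r3 (0 - b) * (-1)) b :=
    (hasDerivAt_ell h2 h3 (ne_of_lt h23) (0 - b)).comp b d2
  have tot : HasDerivAt (fun y => L3 r1 r2 r3 a y)
      (gg r1 r2 (b - a) * 1 + gg r2 r3 (0 - b) * (-1)) b :=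
    (t1.add t2).add_const (ell r3 r1 (a - 0))
  have := tot.deriv
  unfold pd2
  rw [this]; ring

lemma pd11_L3 (h1 : 0 < r1) (h12 : r1 < r2) (h23 : r2 < r3) (a b : ℝ) :
    pd1 (pd1 (L3 r1 r2 r3)) a b = hh r3 r1 (a - 0) + hh r1 r2 (b - a) := by
  have h2 : 0 < r2 := h1.trans h12
  have h3 : 0 < r3 := h2.trans h23
  have hfun : (fun x => deriv (fun x' => L3 r1 r2 r3 x' b) x)
      = fun x => gg r3 r1 (x - 0) - gg r1 r2 (b - x) :=
    funext fun x => pd1_L3 h1 h12 h23 x b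
  have d1 : HasDerivAt (fun x : ℝ => b - x) (-1) a := by
    simpa using (hasDerivAt_id a).const_sub b
  have d2 : HasDerivAt (fun x : ℝ => x - 0) 1 a := (hasDerivAt_id a).sub_const 0
  have t1 : HasDerivAt (fun x => gg r3 r1 (x - 0)) (hh r3 r1 (a - 0) * 1) a :=
    (hasDerivAt_gg h3 h1 (ne_of_gt (h12.trans h23)) (a - 0)).comp (h₂ := fun t => gg r3 r1 t) a d2
  have t2 : HasDerivAt (fun x => gg r1 r2 (b - x)) (hh r1 r2 (b - a) * (-1)) a :=
    (hasDerivAt_gg h1 h2 (ne_of_lt h12) (b - a)).comp a d1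
  have tot := (t1.sub t2).deriv
  unfold pd1
  rw [hfun]; exact tot.trans (by ring)

lemma pd21_L3 (h1 : 0 < r1) (h12 : r1 < r2) (h23 : r2 < r3) (a b : ℝ) :
    pd2 (pd1 (L3 r1 r2 r3)) a b = -hh r1 r2 (b - a) := by
  have h2 : 0 < r2 := h1.trans h12
  have hfun : (fun y => pd1 (L3 r1 r2 r3) a y)
      = fun y => gg r3 r1 (a - 0) - gg r1 r2 (y - a) :=
    funext fun y => pd1_L3 h1 h12 h23 a y
  have d1 : HasDerivAt (fun y : ℝ => y - a) 1 b := (hasDerivAt_id b).sub_const a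
  have t2 : HasDerivAt (fun y => gg r1 r2 (y - a)) (hh r1 r2 (b - a) * 1) b :=
    (hasDerivAt_gg h1 h2 (ne_of_lt h12) (b - a)).comp (h₂ := fun t => gg r1 r2 t) b d1
  have tot := ((hasDerivAt_const b (gg r3 r1 (a - 0))).sub t2).deriv
  unfold pd2
  rw [hfun]; exact tot.trans (by ring)

lemma pd12_L3 (h1 : 0 < r1) (h12 : r1 < r2) (h23 : r2 < r3) (a b : ℝ) :
    pd1 (pd2 (L3 r1 r2 r3)) a b = -hh r1 r2 (b - a) := by
  have h2 : 0 < r2 := h1.trans h12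
  have hfun : (fun x => pd2 (L3 r1 r2 r3) x b)
      = fun x => gg r1 r2 (b - x) - gg r2 r3 (0 - b) :=
    funext fun x => pd2_L3 h1 h12 h23 x b
  have d1 : HasDerivAt (fun x : ℝ => b - x) (-1) a := by
    simpa using (hasDerivAt_id a).const_sub b
  have t1 : HasDerivAt (fun x => gg r1 r2 (b - x)) (hh r1 r2 (b - a) * (-1)) a :=
    (hasDerivAt_gg h1 h2 (ne_of_lt h12) (b - a)).comp a d1
  have tot := (t1.sub_const (gg r2 r3 (0 - b))).deriv
  unfold pd1
  rw [hfun, tot]; ring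

lemma pd22_L3 (h1 : 0 < r1) (h12 : r1 < r2) (h23 : r2 < r3) (a b : ℝ) :
    pd2 (pd2 (L3 r1 r2 r3)) a b = hh r1 r2 (b - a) + hh r2 r3 (0 - b) := by
  have h2 : 0 < r2 := h1.trans h12
  have h3 : 0 < r3 := h2.trans h23
  have hfun : (fun y => deriv (fun y' => L3 r1 r2 r3 a y') y)
      = fun y => gg r1 r2 (y - a) - gg r2 r3 (0 - y) :=
    funext fun y => pd2_L3 h1 h12 h23 a y
  have d1 : HasDerivAt (fun y : ℝ => y - a) 1 b := (hasDerivAt_id b).sub_const a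
  have d2 : HasDerivAt (fun y : ℝ => 0 - y) (-1) b := by
    simpa using (hasDerivAt_id b).const_sub 0
  have t1 : HasDerivAt (fun y => gg r1 r2 (y - a)) (hh r1 r2 (b - a) * 1) b :=
    (hasDerivAt_gg h1 h2 (ne_of_lt h12) (b - a)).comp (h₂ := fun t => gg r1 r2 t) b d1
  have t2 : HasDerivAt (fun y => gg r2 r3 (0 - y)) (hh r2 r3 (0 - b) * (-1)) b :=
    (hasDerivAt_gg h2 h3 (ne_of_lt h23) (0 - b)).comp b d2
  have tot := (t1.sub t2).deriv
  unfold pd2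
  rw [hfun]; exact tot.trans (by ring)

lemma hess3_det (h1 : 0 < r1) (h12 : r1 < r2) (h23 : r2 < r3) (a b : ℝ) :
    (hess3 r1 r2 r3 a b).det =
      (hh r3 r1 (a - 0) + hh r1 r2 (b - a)) * (hh r1 r2 (b - a) + hh r2 r3 (0 - b))
        - hh r1 r2 (b - a) ^ 2 := by
  rw [hess3, Matrix.det_fin_two_of, pd11_L3 h1 h12 h23, pd12_L3 h1 h12 h23,
    pd21_L3 h1 h12 h23, pd22_L3 h1 h12 h23]
  ring

end

/-- Theorem 3, Morse property: for `0 < r1 < r2 < r3` every critical point of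
the perimeter (as a `2π`-periodic function of `(α₁, α₂)`, `α₃ = 0`) is nondegenerate:
the Hessian determinant is nonzero there. Thus the perimeter is a Morse function. -/
theorem stmt_9 (r1 r2 r3 : ℝ) (h1 : 0 < r1) (h12 : r1 < r2) (h23 : r2 < r3) :
    ∀ a1 a2 : ℝ,
      deriv (fun t => L3 r1 r2 r3 t a2) a1 = 0 →
      deriv (fun t => L3 r1 r2 r3 a1 t) a2 = 0 →
      (hess3 r1 r2 r3 a1 a2).det ≠ 0 := by
  intro a1 a2 hcrit1 hcrit2
  have e1 : deriv (fun t => L3 r1 r2 r3 t a2) a1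
      = gg r3 r1 (a1 - 0) - gg r1 r2 (a2 - a1) := pd1_L3 h1 h12 h23 a1 a2
  have e2 : deriv (fun t => L3 r1 r2 r3 a1 t) a2
      = gg r1 r2 (a2 - a1) - gg r2 r3 (0 - a2) := pd2_L3 h1 h12 h23 a1 a2
  rw [e1] at hcrit1
  rw [e2] at hcrit2
  have hg3 : gg r3 r1 (a1 - 0) = gg r1 r2 (a2 - a1) := by linarith
  have hg2 : gg r1 r2 (a2 - a1) = gg r2 r3 (0 - a2) := by linarith
  rw [hess3_det h1 h12 h23]
  exact core h1 h12 h23 (by ring) hg3 hg2
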